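/- In the deterministic-tree setup: for every R_c-limit point v0 and any two vertices v1, v2 ∈ P_{v0}, either v1 lies in the T-cone of v2 or v2 lies in the T-cone of v1. -/

import Mathlib

/-- Edge relation of the reversal `R(G)` of a graph `G` with edge set `E` over
the color set `D`: colors are `D ⊕ D` (original colors `Sum.inl d` and fresh
inverse colors `Sum.inr d = d⁻`). -/
def RevEdge {V D : Type*} (E : Set (V × D × V)) : V → (D ⊕ D) → V → Prop
  | v, Sum.inl d, w => (v, d, w) ∈ E
  | v, Sum.inr d, w => (w, d, v) ∈ E

/-- `Marks E v α w`: the word `α` over `D ⊕ D⁻` marks a path from `v` to `w`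
in the reversal `R(G)` of the graph with edge set `E`. -/
def Marks {V D : Type*} (E : Set (V × D × V)) : V → List (D ⊕ D) → V → Prop
  | v, [], w => v = w
  | v, c :: α, w => ∃ u, RevEdge E v c u ∧ Marks E u α w

/-- `IsEdgePath E v l w`: the list of edges `l` forms a directed path from `v`
to `w` in the graph with edge set `E`. -/
def IsEdgePath {V D : Type*} (E : Set (V × D × V)) : V → List (V × D × V) → V → Prop
  | v, [], w => v = w
  | v, e :: l, w => e ∈ E ∧ e.1 = v ∧ IsEdgePath E e.2.2 l w

/-- A graph is a tree if it has a root from which every vertex is reachable by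
a unique directed path. -/
def IsTree {V D : Type*} (E : Set (V × D × V)) : Prop :=
  ∃ r : V, ∀ v : V, ∃! l : List (V × D × V), IsEdgePath E r l v

/-- The cone of a vertex `v`: the set of vertices reachable from `v` by a
directed path (including `v` itself). -/
def Cone {V D : Type*} (E : Set (V × D × V)) (v : V) : Set V :=
  {w | ∃ l : List (V × D × V), IsEdgePath E v l w}

/-- `AutRun Δ q α q'`: the nondeterministic finite automaton with transition
relation `Δ` can go from state `q` to state `q'` reading the word `α`. -/
def AutRun {D Q : Type*} (Δ : Set (Q × (D ⊕ D) × Q)) : Q → List (D ⊕ D) → Q → Prop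
  | q, [], q' => q = q'
  | q, c :: α, q' => ∃ q'', (q, c, q'') ∈ Δ ∧ AutRun Δ q'' α q'

/-- The automaton with transition relation `Δ` can switch from state `q1` to
state `q2` on a path from `v1` to `v2`: some word over `D ⊕ D⁻` marks a path
from `v1` to `v2` in `R(T)` and takes the automaton from `q1` to `q2`. -/
def Switch {V D Q : Type*} (E : Set (V × D × V)) (Δ : Set (Q × (D ⊕ D) × Q))
    (q1 q2 : Q) (v1 v2 : V) : Prop :=
  ∃ α : List (D ⊕ D), Marks E v1 α v2 ∧ AutRun Δ q1 α q2

/-- The vertex-pair type of `(v1, v2)`: the pair of sets of state pairs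
`(q1, q2)` such that the automaton can switch from `q1` to `q2` on a path from
`v1` to `v2` (resp. from `v2` to `v1`). -/
def pairType {V D Q : Type*} (E : Set (V × D × V)) (Δ : Set (Q × (D ⊕ D) × Q))
    (v1 v2 : V) : Set (Q × Q) × Set (Q × Q) :=
  ({q | Switch E Δ q.1 q.2 v1 v2}, {q | Switch E Δ q.1 q.2 v2 v1})

/-- A graph is deterministic if for every vertex and color there is at most
one outgoing edge of that color. -/
def IsDeterministic {V D : Type*} (E : Set (V × D × V)) : Prop :=
  ∀ (v : V) (d : D) (w w' : V), (v, d, w) ∈ E → (v, d, w') ∈ E → w = w'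

/-- `v0` is a limit point of the strict (well-)order `R`: it is not the least
element and it is the supremum of the elements strictly below it. -/
def IsLimitPt {V : Type*} (R : V → V → Prop) (v0 : V) : Prop :=
  (∃ v, R v v0) ∧ ∀ v, R v v0 → ∃ w, R v w ∧ R w v0

/-- A set `B` is `R`-cofinal in `v0`: all its elements are strictly `R`-below
`v0` and `sup_R B = v0`. -/
def CofinalIn {V : Type*} (R : V → V → Prop) (B : Set V) (v0 : V) : Prop :=
  (∀ b ∈ B, R b v0) ∧ ∀ v, R v v0 → ∃ b ∈ B, (b = v ∨ R v b)

/-- `S_{v0}`: the set of vertices whose `T`-cone contains a subset cofinal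
in `v0`. -/
def Sset {V D : Type*} (E : Set (V × D × V)) (R : V → V → Prop) (v0 : V) : Set V :=
  {v | ∃ B ⊆ Cone E v, CofinalIn R B v0}

/-- `P_{v0}`: the set of vertices of `S_{v0}` whose `T`-cone does not
contain `v0`. -/
def Pset {V D : Type*} (E : Set (V × D × V)) (R : V → V → Prop) (v0 : V) : Set V :=
  {v | v ∈ Sset E R v0 ∧ v0 ∉ Cone E v}

section AuxLemmas

variable {V D Q : Type*}

lemma isEdgePath_append {E : Set (V × D × V)} {a b : V} {l m : List (V × D × V)} :
    IsEdgePath E a (l ++ m) b ↔ ∃ u, IsEdgePath E a l u ∧ IsEdgePath E u m b := by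
  induction l generalizing a with
  | nil =>
    constructor
    · intro h; exact ⟨a, rfl, h⟩
    · rintro ⟨u, rfl, h⟩; exact h
  | cons e l ih =>
    constructor
    · rintro ⟨he, h1, h2⟩
      obtain ⟨u, hu1, hu2⟩ := ih.mp h2
      exact ⟨u, ⟨he, h1, hu1⟩, hu2⟩
    · rintro ⟨u, ⟨he, h1, h2⟩, h3⟩
      exact ⟨he, h1, ih.mpr ⟨u, h2, h3⟩⟩

lemma isEdgePath_unique_end {E : Set (V × D × V)} {a : V} {l : List (V × D × V)} {u u' : V}
    (h : IsEdgePath E a l u) (h' : IsEdgePath E a l u') : u = u' := by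
  induction l generalizing a with
  | nil => exact h.symm.trans h'
  | cons e l ih => exact ih h.2.2 h'.2.2

lemma parent_unique {E : Set (V × D × V)} (hTree : IsTree E) {u p a : V} {d d' : D}
    (h1 : (u, d, a) ∈ E) (h2 : (p, d', a) ∈ E) : u = p := by
  obtain ⟨r, hr⟩ := hTree
  obtain ⟨lu, hlu, -⟩ := hr u
  obtain ⟨lp, hlp, -⟩ := hr p
  have e1 : IsEdgePath E r (lu ++ [(u, d, a)]) a :=
    isEdgePath_append.mpr ⟨u, hlu, h1, rfl, rfl⟩
  have e2 : IsEdgePath E r (lp ++ [(p, d', a)]) a :=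
    isEdgePath_append.mpr ⟨p, hlp, h2, rfl, rfl⟩
  have heq := (hr a).unique e1 e2
  have h3 := congrArg List.getLast? heq
  simp only [List.getLast?_concat] at h3
  exact congrArg (fun x => x.1) (Option.some.inj h3)

lemma mem_cone_self (E : Set (V × D × V)) (v : V) : v ∈ Cone E v := ⟨[], rfl⟩

lemma cone_trans {E : Set (V × D × V)} {v x y : V}
    (hx : x ∈ Cone E v) (hy : y ∈ Cone E x) : y ∈ Cone E v := by
  obtain ⟨l, hl⟩ := hx
  obtain ⟨m, hm⟩ := hy
  exact ⟨l ++ m, isEdgePath_append.mpr ⟨x, hl, hm⟩⟩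

lemma cone_step {E : Set (V × D × V)} {v x y : V} {d : D}
    (hx : x ∈ Cone E v) (h : (x, d, y) ∈ E) : y ∈ Cone E v :=
  cone_trans hx ⟨[(x, d, y)], h, rfl, rfl⟩

lemma parent_mem_cone {E : Set (V × D × V)} (hTree : IsTree E) {v a u : V} {d : D}
    (ha : a ∈ Cone E v) (hne : a ≠ v) (h : (u, d, a) ∈ E) : u ∈ Cone E v := by
  obtain ⟨l, hl⟩ := ha
  rcases List.eq_nil_or_concat l with rfl | ⟨l', e, rfl⟩
  · exact absurd hl.symm hne
  · rw [List.concat_eq_append] at hl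
    obtain ⟨p, hp1, hp2⟩ := isEdgePath_append.mp hl
    obtain ⟨he, he1, he2⟩ := hp2
    have hedge : (p, e.2.1, a) ∈ E := by
      have : e = (p, e.2.1, a) := by
        rw [← he1, ← he2]
      rwa [this] at he
    have := parent_unique hTree h hedge
    subst this
    exact ⟨l', hp1⟩

lemma cone_comparable {E : Set (V × D × V)} (hTree : IsTree E) {v1 v2 x : V}
    (h1 : x ∈ Cone E v1) (h2 : x ∈ Cone E v2) :
    v1 ∈ Cone E v2 ∨ v2 ∈ Cone E v1 := by
  obtain ⟨r, hr⟩ := hTree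
  obtain ⟨m1, hm1⟩ := h1
  obtain ⟨m2, hm2⟩ := h2
  obtain ⟨l1, hl1, -⟩ := hr v1
  obtain ⟨l2, hl2, -⟩ := hr v2
  have e1 : IsEdgePath E r (l1 ++ m1) x := isEdgePath_append.mpr ⟨v1, hl1, hm1⟩
  have e2 : IsEdgePath E r (l2 ++ m2) x := isEdgePath_append.mpr ⟨v2, hl2, hm2⟩
  have heq : l1 ++ m1 = l2 ++ m2 := ((hr x).unique e1 e2)
  rcases List.append_eq_append_iff.mp heq with ⟨a', ha1, -⟩ | ⟨c', ha1, -⟩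
  · right
    rw [ha1] at hl2
    obtain ⟨u, hu1, hu2⟩ := isEdgePath_append.mp hl2
    have : u = v1 := isEdgePath_unique_end hu1 hl1
    subst this
    exact ⟨a', hu2⟩
  · left
    rw [ha1] at hl1
    obtain ⟨u, hu1, hu2⟩ := isEdgePath_append.mp hl1
    have : u = v2 := isEdgePath_unique_end hu1 hl2
    subst this
    exact ⟨c', hu2⟩

lemma marks_enter_cone {E : Set (V × D × V)} (hTree : IsTree E) {v a b : V}
    {α : List (D ⊕ D)} (h : Marks E a α b)
    (ha : a ∉ Cone E v) (hb : b ∈ Cone E v) :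
    ∃ β γ, α = β ++ γ ∧ Marks E a β v ∧ Marks E v γ b := by
  induction α generalizing a with
  | nil => exact absurd (h ▸ hb) ha
  | cons c α ih =>
    obtain ⟨u, hedge, hmarks⟩ := h
    by_cases hu : u ∈ Cone E v
    · have huv : u = v := by
        cases c with
        | inl d =>
          by_contra hne
          exact ha (parent_mem_cone hTree hu hne hedge)
        | inr d =>
          exact absurd (cone_step hu hedge) ha
      subst huv
      exact ⟨[c], α, rfl, ⟨u, hedge, rfl⟩, hmarks⟩
    · obtain ⟨β, γ, hbg, hβ, hγ⟩ := ih hmarks hu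
      exact ⟨c :: β, γ, by rw [hbg]; rfl, ⟨u, hedge, hβ⟩, hγ⟩

lemma marks_append_join {E : Set (V × D × V)} {a b c : V} {α β : List (D ⊕ D)}
    (h1 : Marks E a α b) (h2 : Marks E b β c) : Marks E a (α ++ β) c := by
  induction α generalizing a with
  | nil => rwa [h1]
  | cons x α ih =>
    obtain ⟨u, he, hm⟩ := h1
    exact ⟨u, he, ih hm⟩

lemma autRun_append_join {Δ : Set (Q × (D ⊕ D) × Q)} {q q' q'' : Q}
    {α β : List (D ⊕ D)} (h1 : AutRun Δ q α q') (h2 : AutRun Δ q' β q'') :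
    AutRun Δ q (α ++ β) q'' := by
  induction α generalizing q with
  | nil => rwa [h1]
  | cons x α ih =>
    obtain ⟨p, hp, hr⟩ := h1
    exact ⟨p, hp, ih hr⟩

lemma autRun_append_split {Δ : Set (Q × (D ⊕ D) × Q)} {q q'' : Q}
    {α β : List (D ⊕ D)} (h : AutRun Δ q (α ++ β) q'') :
    ∃ q', AutRun Δ q α q' ∧ AutRun Δ q' β q'' := by
  induction α generalizing q with
  | nil => exact ⟨q, rfl, h⟩
  | cons x α ih =>
    obtain ⟨p, hp, hr⟩ := h
    obtain ⟨q', hq1, hq2⟩ := ih hr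
    exact ⟨q', ⟨p, hp, hq1⟩, hq2⟩

lemma switch_trans {E : Set (V × D × V)} {Δ : Set (Q × (D ⊕ D) × Q)}
    {p q s : Q} {a b c : V} (h1 : Switch E Δ p q a b) (h2 : Switch E Δ q s b c) :
    Switch E Δ p s a c := by
  obtain ⟨α, hm1, hr1⟩ := h1
  obtain ⟨β, hm2, hr2⟩ := h2
  exact ⟨α ++ β, marks_append_join hm1 hm2, autRun_append_join hr1 hr2⟩

lemma switch_enter {E : Set (V × D × V)} (hTree : IsTree E)
    {Δ : Set (Q × (D ⊕ D) × Q)} {qI qc : Q} {v a b : V}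
    (h : Switch E Δ qI qc a b) (ha : a ∉ Cone E v) (hb : b ∈ Cone E v) :
    ∃ q, Switch E Δ qI q a v ∧ Switch E Δ q qc v b := by
  obtain ⟨α, hm, hr⟩ := h
  obtain ⟨β, γ, rfl, hβ, hγ⟩ := marks_enter_cone hTree hm ha hb
  obtain ⟨q, hq1, hq2⟩ := autRun_append_split hr
  exact ⟨q, ⟨β, hβ, hq1⟩, ⟨γ, hγ, hq2⟩⟩

end AuxLemmas

/-- Deterministic-tree setup: `T` is a deterministic tree over a finite color
set `D`, `B` is a nondeterministic finite automaton over `D ⊕ D⁻` with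
distinguished states `qI, qc`, and the relation
`R_c v1 v2 := B can switch from qI to qc on a path from v1 to v2 in R(T)`
is a strict well-order on the vertices. Then for every `R_c`-limit point `v0`
and all `v1, v2 ∈ P_{v0}`, either `v1` lies in the `T`-cone of `v2` or `v2`
lies in the `T`-cone of `v1`. -/
theorem Pset_cone_linear {V D Q : Type*} [Fintype D] [Fintype Q]
    (E : Set (V × D × V)) (hTree : IsTree E) (hdet : IsDeterministic E)
    (Δ : Set (Q × (D ⊕ D) × Q)) (qI qc : Q)
    (hwo : IsWellOrder V (Switch E Δ qI qc))
    (v0 : V) (hlim : IsLimitPt (Switch E Δ qI qc) v0)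
    (v1 v2 : V)
    (h1 : v1 ∈ Pset E (Switch E Δ qI qc) v0)
    (h2 : v2 ∈ Pset E (Switch E Δ qI qc) v0) :
    v1 ∈ Cone E v2 ∨ v2 ∈ Cone E v1 := by
  by_contra hcon
  push_neg at hcon
  obtain ⟨h12, h21⟩ := hcon
  set R := Switch E Δ qI qc with hR
  have htrans : ∀ {a b c : V}, R a b → R b c → R a c :=
    fun h h' => (@instIsTransOfIsWellOrder V R hwo).trans _ _ _ h h'
  have hirr : ∀ a : V, ¬ R a a := fun a => hwo.toIsWellFounded.wf.isIrrefl.irrefl a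
  -- disjointness of the two cones
  have hdisj : ∀ x, x ∈ Cone E v1 → x ∉ Cone E v2 := fun x hx1 hx2 =>
    (cone_comparable hTree hx1 hx2).elim h12 h21
  obtain ⟨⟨B1, hB1sub, hB1cof⟩, -⟩ := h1
  obtain ⟨⟨B2, hB2sub, hB2cof⟩, -⟩ := h2
  -- B1 is nonempty
  obtain ⟨w, hw⟩ := hlim.1
  obtain ⟨b0, hb0B, -⟩ := hB1cof.2 w hw
  -- the step lemma
  have step : ∀ x : {x : V // x ∈ B1}, ∃ y : {x : V // x ∈ B1},
      ∃ y' : V, y' ∈ B2 ∧ R x.1 y' ∧ R y' y.1 := by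
    rintro ⟨x, hx⟩
    have hxv0 : R x v0 := hB1cof.1 x hx
    obtain ⟨y', hy'B, hy'⟩ := hB2cof.2 x hxv0
    have hxy' : R x y' := by
      rcases hy' with rfl | hlt
      · exact absurd (hB2sub hy'B) (hdisj y' (hB1sub hx))
      · exact hlt
    have hy'v0 : R y' v0 := hB2cof.1 y' hy'B
    obtain ⟨y, hyB, hy⟩ := hB1cof.2 y' hy'v0
    have hy'y : R y' y := by
      rcases hy with rfl | hlt
      · exact absurd (hB2sub hy'B) (hdisj y (hB1sub hyB))
      · exact hlt
    exact ⟨⟨y, hyB⟩, y', hy'B, hxy', hy'y⟩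
  choose g g' hgB2 hg1 hg2 using step
  -- the sequence
  set b : ℕ → {x : V // x ∈ B1} := fun n => g^[n] ⟨b0, hb0B⟩ with hb
  have hbsucc : ∀ n, b (n + 1) = g (b n) := fun n =>
    Function.iterate_succ_apply' g n _
  have hstep : ∀ n, R (b n).1 (b (n + 1)).1 := fun n => by
    rw [hbsucc n]; exact htrans (hg1 (b n)) (hg2 (b n))
  have chain : ∀ i j, i < j → R (b i).1 (b j).1 := by
    intro i j hij
    induction j with
    | zero => omega
    | succ j ih =>
      rcases Nat.lt_succ_iff_lt_or_eq.mp hij with h | rfl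
      · exact htrans (ih h) (hstep j)
      · exact hstep i
  -- the states at v2
  have hq : ∀ n, ∃ q : Q, Switch E Δ qI q (b n).1 v2 ∧ Switch E Δ q qc v2 (g' (b n)) := by
    intro n
    have hsw : Switch E Δ qI qc (b n).1 (g' (b n)) := hg1 (b n)
    have hnot : (b n).1 ∉ Cone E v2 := hdisj _ (hB1sub (b n).2)
    have hin : g' (b n) ∈ Cone E v2 := hB2sub (hgB2 (b n))
    exact switch_enter hTree hsw hnot hin
  choose qf hqf1 hqf2 using hq
  -- pigeonhole
  obtain ⟨i, j, hij, hqij⟩ := Finite.exists_ne_map_eq_of_infinite qf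
  have key : ∀ i j, i < j → qf i = qf j → False := by
    intro i j hlt hqij
    -- b j R (g' (b i)) R b j : contradiction
    have h1' : R (b j).1 (g' (b i)) :=
      switch_trans (hqij.symm ▸ hqf1 j) (hqf2 i)
    have h2' : R (g' (b i)) (b j).1 := by
      rcases Nat.lt_or_ge (i + 1) j with h | h
      · have hx := hg2 (b i)
        rw [← hbsucc i] at hx
        exact htrans hx (chain (i + 1) j h)
      · have hji : j = i + 1 := by omega
        subst hji
        rw [hbsucc i]
        exact hg2 (b i)
    exact hirr _ (htrans h1' h2')
  rcases hij.lt_or_gt with hlt | hlt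
  · exact key i j hlt hqij
  · exact key j i hlt hqij.symm
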